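/- Let a' be a Δ-decoy of a and b' be a Δ-decoy of b in a poset S with pairwise weights γ satisfying partial observability (γ(x,y) = 0 when x ∥ y) and order compatibility. Then a and b are comparable if and only if max(γ(b, a'), γ(a, b')) ≥ Δ. -/
import Mathlib

/-- Using Δ-decoys, comparability of two arms can be detected:
a and b are comparable iff max(γ(b,a'), γ(a,b')) ≥ Δ. -/
theorem stmt_8 {α : Type*} [PartialOrder α]
    (γ : α → α → ℝ)
    (hcompat : ∀ i j : α, j < i ↔ 0 < γ i j)
    (hanti : ∀ i j : α, γ i j = -γ j i)
    (hincomp : ∀ i j : α, ¬ i ≤ j → ¬ j ≤ i → γ i j = 0)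
    (Δ : ℝ) (hΔ : 0 < Δ)
    (a b a' b' : α)
    -- a' is a Δ-decoy of a
    (hdA1 : a' ≤ a ∧ Δ ≤ γ a a')
    (hdA2 : ∀ c : α, (¬ a ≤ c ∧ ¬ c ≤ a) → (¬ a' ≤ c ∧ ¬ c ≤ a'))
    (hdA3 : ∀ c : α, a ≤ c → Δ ≤ γ c a')
    -- b' is a Δ-decoy of b
    (hdB1 : b' ≤ b ∧ Δ ≤ γ b b')
    (hdB2 : ∀ c : α, (¬ b ≤ c ∧ ¬ c ≤ b) → (¬ b' ≤ c ∧ ¬ c ≤ b'))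
    (hdB3 : ∀ c : α, b ≤ c → Δ ≤ γ c b') :
    (a ≤ b ∨ b ≤ a) ↔ Δ ≤ max (γ b a') (γ a b') := by
  constructor
  · rintro (h | h)
    · exact le_max_of_le_left (hdA3 b h)
    · exact le_max_of_le_right (hdB3 a h)
  · intro h
    by_contra hc
    push_neg at hc
    obtain ⟨hab, hba⟩ := hc
    have h1 := hdA2 b ⟨hab, hba⟩
    have h2 := hdB2 a ⟨hba, hab⟩
    have e1 : γ b a' = 0 := hincomp b a' h1.2 h1.1
    have e2 : γ a b' = 0 := hincomp a b' h2.2 h2.1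
    rw [e1, e2] at h
    simp only [max_self] at h
    exact absurd h hΔ.not_ge
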